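/- Let S = ⟨qm₁,…,qm_d, pn₁,…,pn_k⟩ be a gluing of S₁ and S₂, let x∈S₁ be nonzero, z₁∈S₁ and z₂∈S₂. Then: (1) if u = qz₁ + pz₂ ∈ Max AP(S, qx) and z₂∈AP(S₂,q), then z₁∈Max AP(S₁,x) and z₂∈Max AP(S₂,q); (2) if z₁∈Max AP(S₁,x) and z₂∈Max AP(S₂,q), and Max AP(S₁,x) is a singleton or Max AP(S₂,q) is a singleton, then qz₁ + pz₂ ∈ Max AP(S, qx). -/

import Mathlib

open scoped Pointwise

/-- `S ⊆ ℕ` is a numerical semigroup: it contains `0`, is closed under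
addition, and has finite complement in `ℕ`. -/
def IsNumSgp (S : Set ℕ) : Prop :=
  (0 : ℕ) ∈ S ∧ (∀ a ∈ S, ∀ b ∈ S, a + b ∈ S) ∧ {x : ℕ | x ∉ S}.Finite

/-- `nM S t` is the `t`-fold sumset of the maximal ideal `M = S \ {0}`,
with the convention `nM S 0 = S`. -/
def nM (S : Set ℕ) : ℕ → Set ℕ
  | 0 => S
  | t + 1 => (S \ {0}) + nM S t

/-- the order of `s` with respect to `S` : the largest `t` with `s ∈ tM`. -/
noncomputable def ordS (S : Set ℕ) (s : ℕ) : ℕ := sSup {t : ℕ | s ∈ nM S t}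

/-- the multiplicity of `S` : its least nonzero element. -/
noncomputable def mult (S : Set ℕ) : ℕ := sInf {x : ℕ | x ∈ S ∧ x ≠ 0}

/-- the Apéry set of `S` with respect to `x` : elements `s ∈ S` with `s - x ∉ S`. -/
def Ap (S : Set ℕ) (x : ℕ) : Set ℕ := {s : ℕ | s ∈ S ∧ ¬ ∃ t ∈ S, s = t + x}

/-- membership of an integer in (the image in `ℤ` of) `S`. -/
def zmem (S : Set ℕ) (z : ℤ) : Prop := ∃ t ∈ S, (t : ℤ) = z

/-- the Frobenius number of `S` : the largest integer not in `S`. -/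
noncomputable def Frob (S : Set ℕ) : ℤ := sSup {z : ℤ | ¬ zmem S z}

/-- `S` is symmetric: for every integer `z`, `z ∈ S` iff `F(S) - z ∉ S`. -/
def IsSymmetric (S : Set ℕ) : Prop := ∀ z : ℤ, zmem S z ↔ ¬ zmem S (Frob S - z)

/-- the set of maximal elements of `Ap S x` with respect to the order
`u ⪯ v` iff `v = u + z` for some `z ∈ S`. -/
def MaxAp (S : Set ℕ) (x : ℕ) : Set ℕ :=
  {w : ℕ | w ∈ Ap S x ∧ ∀ y ∈ Ap S x, (∃ z ∈ S, y = w + z) → y = w}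

/-- the set of maximal elements of `Ap S x` with respect to the order
`u ⪯_M v` iff `v = u + z` for some `z ∈ S` with `ord(v) = ord(u) + ord(z)`. -/
def MaxMAp (S : Set ℕ) (x : ℕ) : Set ℕ :=
  {w : ℕ | w ∈ Ap S x ∧ ∀ y ∈ Ap S x,
    (∃ z ∈ S, y = w + z ∧ ordS S y = ordS S w + ordS S z) → y = w}

/-- `S` is M-pure with respect to `x` : all maximal elements of `Ap S x`
under `⪯_M` have the same order. -/
def MPureWrt (S : Set ℕ) (x : ℕ) : Prop :=
  ∀ w ∈ MaxMAp S x, ∀ w' ∈ MaxMAp S x, ordS S w = ordS S w'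

/-- `S` is M-pure : it is M-pure with respect to its multiplicity. -/
def MPure (S : Set ℕ) : Prop := MPureWrt S (mult S)

/-- `β_i(x)` : the number of elements of `Ap S x` of order `i`. -/
noncomputable def betaS (S : Set ℕ) (x i : ℕ) : ℕ := {w ∈ Ap S x | ordS S w = i}.ncard

/-- `d(x)` : the maximal order of an element of `Ap S x`. -/
noncomputable def dS (S : Set ℕ) (x : ℕ) : ℕ := sSup (ordS S '' Ap S x)

/-- the reduction number of `S` : the least `r` with `(r+1)M = m(S) + rM`. -/
noncomputable def redNum (S : Set ℕ) : ℕ :=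
  sInf {r : ℕ | nM S (r + 1) = (fun y => mult S + y) '' nM S r}

/-- `l_x(S) = max { ord(s+x) - ord(x) - ord(s) : s ∈ S, ord(s) ≤ r }`. -/
noncomputable def lS (S : Set ℕ) (x : ℕ) : ℕ :=
  sSup {t : ℕ | ∃ s ∈ S, ordS S s ≤ redNum S ∧ t = ordS S (s + x) - ordS S x - ordS S s}

/-- the Hilbert function of `S`. -/
noncomputable def HilbS (S : Set ℕ) (t : ℕ) : ℕ := (nM S t \ nM S (t + 1)).ncard

/-- The data of a gluing `S = ⟨q m₁, …, q m_d, p n₁, …, p n_k⟩` of two numerical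
semigroups `S₁ = ⟨m₁, …, m_d⟩` and `S₂ = ⟨n₁, …, n_k⟩`, minimally generated by
`m₁ < ⋯ < m_d` and `n₁ < ⋯ < n_k`, where `p ∈ S₁ \ {m₁, …, m_d}`,
`q ∈ S₂ \ {n₁, …, n_k}` and `gcd(p, q) = 1`. -/
structure Gluing where
  d : ℕ
  k : ℕ
  hd : 0 < d
  hk : 0 < k
  m : Fin d → ℕ
  n : Fin k → ℕ
  p : ℕ
  q : ℕ
  hm : StrictMono m
  hn : StrictMono n
  hmin₁ : ∀ i, m i ∉ AddSubmonoid.closure (Set.range m \ {m i})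
  hmin₂ : ∀ j, n j ∉ AddSubmonoid.closure (Set.range n \ {n j})
  hnum₁ : IsNumSgp (AddSubmonoid.closure (Set.range m) : Set ℕ)
  hnum₂ : IsNumSgp (AddSubmonoid.closure (Set.range n) : Set ℕ)
  hp : p ∈ AddSubmonoid.closure (Set.range m)
  hq : q ∈ AddSubmonoid.closure (Set.range n)
  hpm : p ∉ Set.range m
  hqn : q ∉ Set.range n
  hpq : Nat.gcd p q = 1

/-- the numerical semigroup `S₁ = ⟨m₁, …, m_d⟩`. -/
def Gluing.S₁ (G : Gluing) : Set ℕ := (AddSubmonoid.closure (Set.range G.m) : Set ℕ)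

/-- the numerical semigroup `S₂ = ⟨n₁, …, n_k⟩`. -/
def Gluing.S₂ (G : Gluing) : Set ℕ := (AddSubmonoid.closure (Set.range G.n) : Set ℕ)

/-- the glued numerical semigroup `S = ⟨q m₁, …, q m_d, p n₁, …, p n_k⟩`. -/
def Gluing.S (G : Gluing) : Set ℕ :=
  (AddSubmonoid.closure
    ((fun x => G.q * x) '' Set.range G.m ∪ (fun x => G.p * x) '' Set.range G.n) : Set ℕ)

/-- the smallest generator `m₁` of `S₁`. -/
def Gluing.m₁ (G : Gluing) : ℕ := G.m ⟨0, G.hd⟩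

/-- the smallest generator `n₁` of `S₂`. -/
def Gluing.n₁ (G : Gluing) : ℕ := G.n ⟨0, G.hk⟩

/-- the gluing is specific if `ord_{S₂}(q) + l_q(S₂) ≤ ord_{S₁}(p)`. -/
def Gluing.Specific (G : Gluing) : Prop := ordS G.S₂ G.q + lS G.S₂ G.q ≤ ordS G.S₁ G.p

/-- the gluing is nice if `q = a n₁` for some `1 < a ≤ ord_{S₁}(p)`. -/
def Gluing.Nice (G : Gluing) : Prop := ∃ a : ℕ, 1 < a ∧ a ≤ ordS G.S₁ G.p ∧ G.q = a * G.n₁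

-- auxiliary lemmas

lemma one_mem_of_closure {T : Set ℕ} (h : (1:ℕ) ∈ AddSubmonoid.closure T) : (1:ℕ) ∈ T := by
  have : ∀ c ∈ AddSubmonoid.closure T, c = 1 → (1:ℕ) ∈ T := by
    intro c hc
    induction hc using AddSubmonoid.closure_induction with
    | mem y hy => intro h1; subst h1; exact hy
    | zero => intro h1; omega
    | add a b ha hb iha ihb =>
      intro h1
      rcases Nat.add_eq_one_iff.mp h1 with ⟨h1,h2⟩|⟨h1,h2⟩
      · exact ihb h2
      · exact iha h1
  exact this 1 h rfl

lemma Gluing.q_ne (G : Gluing) : G.q ≠ 0 := by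
  intro h
  have hp1 : G.p = 1 := by have := G.hpq; rw [h] at this; simpa using this
  have := G.hp; rw [hp1] at this
  have := one_mem_of_closure this
  rw [← hp1] at this
  exact G.hpm this

lemma Gluing.p_ne (G : Gluing) : G.p ≠ 0 := by
  intro h
  have hq1 : G.q = 1 := by have := G.hpq; rw [h] at this; simpa using this
  have := G.hq; rw [hq1] at this
  have := one_mem_of_closure this
  rw [← hq1] at this
  exact G.hqn this

lemma Gluing.zero_mem₁ (G : Gluing) : (0:ℕ) ∈ G.S₁ := AddSubmonoid.zero_mem _
lemma Gluing.add_mem₁ (G : Gluing) {a b : ℕ} (ha : a ∈ G.S₁) (hb : b ∈ G.S₁) : a + b ∈ G.S₁ :=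
  AddSubmonoid.add_mem _ ha hb
lemma Gluing.add_mem₂ (G : Gluing) {a b : ℕ} (ha : a ∈ G.S₂) (hb : b ∈ G.S₂) : a + b ∈ G.S₂ :=
  AddSubmonoid.add_mem _ ha hb
lemma Gluing.addS (G : Gluing) {a b : ℕ} (ha : a ∈ G.S) (hb : b ∈ G.S) : a + b ∈ G.S :=
  AddSubmonoid.add_mem _ ha hb

lemma Gluing.qS₁ (G : Gluing) {a : ℕ} (ha : a ∈ G.S₁) : G.q * a ∈ G.S := by
  induction ha using AddSubmonoid.closure_induction with
  | mem y hy =>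
    exact AddSubmonoid.subset_closure (Or.inl ⟨y, hy, rfl⟩)
  | zero => rw [Nat.mul_zero]; exact (AddSubmonoid.zero_mem _ : (0:ℕ) ∈ G.S)
  | add a b _ _ iha ihb => rw [Nat.mul_add]; exact AddSubmonoid.add_mem _ iha ihb

lemma Gluing.pS₂ (G : Gluing) {b : ℕ} (hb : b ∈ G.S₂) : G.p * b ∈ G.S := by
  induction hb using AddSubmonoid.closure_induction with
  | mem y hy => exact AddSubmonoid.subset_closure (Or.inr ⟨y, hy, rfl⟩)
  | zero => rw [Nat.mul_zero]; exact (AddSubmonoid.zero_mem _ : (0:ℕ) ∈ G.S)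
  | add a b _ _ iha ihb => rw [Nat.mul_add]; exact AddSubmonoid.add_mem _ iha ihb

lemma Gluing.combo (G : Gluing) {a b : ℕ} (ha : a ∈ G.S₁) (hb : b ∈ G.S₂) :
    G.q * a + G.p * b ∈ G.S := G.addS (G.qS₁ ha) (G.pS₂ hb)

lemma Gluing.decomp (G : Gluing) {s : ℕ} (hs : s ∈ G.S) :
    ∃ a ∈ G.S₁, ∃ b ∈ G.S₂, s = G.q * a + G.p * b := by
  induction hs using AddSubmonoid.closure_induction with
  | mem y hy =>
    rcases hy with ⟨c, hc, rfl⟩ | ⟨c, hc, rfl⟩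
    · exact ⟨c, AddSubmonoid.subset_closure hc, 0, AddSubmonoid.zero_mem _, by ring⟩
    · exact ⟨0, AddSubmonoid.zero_mem _, c, AddSubmonoid.subset_closure hc, by ring⟩
  | zero => exact ⟨0, AddSubmonoid.zero_mem _, 0, AddSubmonoid.zero_mem _, by simp⟩
  | add a b _ _ iha ihb =>
    obtain ⟨a1, ha1, b1, hb1, rfl⟩ := iha
    obtain ⟨a2, ha2, b2, hb2, rfl⟩ := ihb
    exact ⟨a1 + a2, G.add_mem₁ ha1 ha2, b1 + b2, G.add_mem₂ hb1 hb2, by ring⟩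

lemma Gluing.qmem₂ (G : Gluing) : G.q ∈ G.S₂ := G.hq
lemma Gluing.pmem₁ (G : Gluing) : G.p ∈ G.S₁ := G.hp

lemma Gluing.fp_mem₁ (G : Gluing) (f : ℕ) : f * G.p ∈ G.S₁ := by
  induction f with
  | zero => simpa using G.zero_mem₁
  | succ n ih => rw [Nat.succ_mul]; exact G.add_mem₁ ih G.pmem₁

lemma Gluing.qf_mem₂ (G : Gluing) (f : ℕ) : G.q * f ∈ G.S₂ := by
  induction f with
  | zero => rw [Nat.mul_zero]; exact (AddSubmonoid.zero_mem _ : (0:ℕ) ∈ G.S₂)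
  | succ n ih => rw [Nat.mul_succ]; exact G.add_mem₂ ih G.qmem₂

lemma Gluing.reduce (G : Gluing) {b : ℕ} (hb : b ∈ G.S₂) :
    ∃ b' ∈ Ap G.S₂ G.q, ∃ f : ℕ, b = b' + f * G.q := by
  induction b using Nat.strong_induction_on with
  | _ b ih =>
    by_cases hA : ∃ t ∈ G.S₂, b = t + G.q
    · obtain ⟨t, ht, rfl⟩ := hA
      have hq0 : 0 < G.q := Nat.pos_of_ne_zero G.q_ne
      obtain ⟨b', hb', f, hf⟩ := ih t (by omega) ht
      refine ⟨b', hb', f + 1, ?_⟩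
      rw [hf]; ring
    · exact ⟨b, ⟨hb, hA⟩, 0, by omega⟩

lemma Gluing.decompAp (G : Gluing) {s : ℕ} (hs : s ∈ G.S) :
    ∃ a ∈ G.S₁, ∃ b ∈ Ap G.S₂ G.q, s = G.q * a + G.p * b := by
  obtain ⟨a, ha, b, hb, rfl⟩ := G.decomp hs
  obtain ⟨b', hb', f, rfl⟩ := G.reduce hb
  exact ⟨a + f * G.p, G.add_mem₁ ha (G.fp_mem₁ f), b', hb', by ring⟩

lemma Gluing.unique_le (G : Gluing) {a a' b b' : ℕ} (hb : b ∈ Ap G.S₂ G.q)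
    (hb' : b' ∈ Ap G.S₂ G.q) (hle : b ≤ b')
    (h : G.q * a + G.p * b = G.q * a' + G.p * b') : a = a' ∧ b = b' := by
  have hq0 : 0 < G.q := Nat.pos_of_ne_zero G.q_ne
  have hd : G.q ∣ (b' - b) := by
    have h1 : G.q * a = G.q * a' + G.p * (b' - b) := by
      have h2 : G.p * b' = G.p * b + G.p * (b' - b) := by
        rw [← Nat.mul_add]; congr 1; omega
      omega
    have haa : a' ≤ a := by
      by_contra hcon
      have : G.q * a < G.q * a' :=
        (Nat.mul_lt_mul_left (Nat.pos_of_ne_zero G.q_ne)).mpr (by omega)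
      omega
    have hms : G.q * (a - a') = G.q * a - G.q * a' := by rw [Nat.mul_sub]
    have : G.q ∣ G.p * (b' - b) := ⟨a - a', by omega⟩
    exact (Nat.Coprime.dvd_of_dvd_mul_left (Nat.coprime_comm.mp G.hpq) this)
  obtain ⟨t, ht⟩ := hd
  rcases Nat.eq_zero_or_pos t with rfl | htp
  · have hbb : b = b' := by omega
    subst hbb
    refine ⟨by nlinarith [hq0], rfl⟩
  · exfalso
    apply hb'.2
    refine ⟨b + G.q * (t - 1), G.add_mem₂ hb.1 (G.qf_mem₂ _) , ?_⟩
    have h2 : G.p * b' = G.p * b + G.p * (b' - b) := by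
      rw [← Nat.mul_add]; congr 1; omega
    have h3 : G.q * (t-1) + G.q = G.q * t := by
      rw [← Nat.mul_succ]; congr 1; omega
    omega

lemma Gluing.unique (G : Gluing) {a a' b b' : ℕ} (hb : b ∈ Ap G.S₂ G.q)
    (hb' : b' ∈ Ap G.S₂ G.q)
    (h : G.q * a + G.p * b = G.q * a' + G.p * b') : a = a' ∧ b = b' := by
  rcases le_total b b' with hle | hle
  · exact G.unique_le hb hb' hle h
  · obtain ⟨h1, h2⟩ := G.unique_le hb' hb hle h.symm
    exact ⟨h1.symm, h2.symm⟩


/-- for a gluing `S` of `S₁` and `S₂`, nonzero `x ∈ S₁`, `z₁ ∈ S₁`, `z₂ ∈ S₂`: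
(1) if `qz₁ + pz₂ ∈ Max AP(S, qx)` and `z₂ ∈ AP(S₂,q)`, then `z₁ ∈ Max AP(S₁,x)`
    and `z₂ ∈ Max AP(S₂,q)`;
(2) if `z₁ ∈ Max AP(S₁,x)`, `z₂ ∈ Max AP(S₂,q)`, and `Max AP(S₁,x)` or `Max AP(S₂,q)`
    is a singleton, then `qz₁ + pz₂ ∈ Max AP(S, qx)`. -/
theorem stmt9 (G : Gluing) (x : ℕ) (hx : x ∈ G.S₁) (hx0 : x ≠ 0)
    (z₁ z₂ : ℕ) (hz₁ : z₁ ∈ G.S₁) (hz₂ : z₂ ∈ G.S₂) :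
    (G.q * z₁ + G.p * z₂ ∈ MaxAp G.S (G.q * x) → z₂ ∈ Ap G.S₂ G.q →
      z₁ ∈ MaxAp G.S₁ x ∧ z₂ ∈ MaxAp G.S₂ G.q) ∧
    (z₁ ∈ MaxAp G.S₁ x → z₂ ∈ MaxAp G.S₂ G.q →
      ((∃ w, MaxAp G.S₁ x = {w}) ∨ (∃ w, MaxAp G.S₂ G.q = {w})) →
      G.q * z₁ + G.p * z₂ ∈ MaxAp G.S (G.q * x)) := by
  have hqpos : 0 < G.q := Nat.pos_of_ne_zero G.q_ne
  have hppos : 0 < G.p := Nat.pos_of_ne_zero G.p_ne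
  constructor
  · intro hu hz₂Ap
    have hz₁Ap : z₁ ∈ Ap G.S₁ x := by
      refine ⟨hz₁, ?_⟩
      rintro ⟨t, ht, rfl⟩
      exact hu.1.2 ⟨G.q * t + G.p * z₂, G.combo ht hz₂, by ring⟩
    refine ⟨⟨hz₁Ap, ?_⟩, ⟨hz₂Ap, ?_⟩⟩
    · rintro y hy ⟨z, hz, rfl⟩
      have hvAp : G.q * (z₁ + z) + G.p * z₂ ∈ Ap G.S (G.q * x) := by
        refine ⟨G.combo (G.add_mem₁ hz₁ hz) hz₂, ?_⟩
        rintro ⟨t, ht, heq⟩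
        obtain ⟨a, ha, b, hb, rfl⟩ := G.decompAp ht
        have heq' : G.q * (z₁ + z) + G.p * z₂ = G.q * (a + x) + G.p * b := by
          rw [heq]; ring
        obtain ⟨h1, h2⟩ := G.unique hz₂Ap hb heq'
        exact hy.2 ⟨a, ha, by omega⟩
      have hm := hu.2 _ hvAp ⟨G.q * z, G.qS₁ hz, by ring⟩
      have : G.q * (z₁ + z) = G.q * z₁ := by omega
      exact Nat.eq_of_mul_eq_mul_left hqpos this
    · rintro y hy ⟨z, hz, rfl⟩
      have hvAp : G.q * z₁ + G.p * (z₂ + z) ∈ Ap G.S (G.q * x) := by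
        refine ⟨G.combo hz₁ (G.add_mem₂ hz₂ hz), ?_⟩
        rintro ⟨t, ht, heq⟩
        obtain ⟨a, ha, b, hb, rfl⟩ := G.decompAp ht
        have heq' : G.q * z₁ + G.p * (z₂ + z) = G.q * (a + x) + G.p * b := by
          rw [heq]; ring
        obtain ⟨h1, h2⟩ := G.unique hy hb heq'
        exact hz₁Ap.2 ⟨a, ha, h1⟩
      have hm := hu.2 _ hvAp ⟨G.p * z, G.pS₂ hz, by ring⟩
      have : G.p * (z₂ + z) = G.p * z₂ := by omega
      exact Nat.eq_of_mul_eq_mul_left hppos this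
  · rintro hm₁ hm₂ -
    have huAp : G.q * z₁ + G.p * z₂ ∈ Ap G.S (G.q * x) := by
      refine ⟨G.combo hz₁ hz₂, ?_⟩
      rintro ⟨t, ht, heq⟩
      obtain ⟨a, ha, b, hb, rfl⟩ := G.decompAp ht
      have heq' : G.q * z₁ + G.p * z₂ = G.q * (a + x) + G.p * b := by
        rw [heq]; ring
      obtain ⟨h1, h2⟩ := G.unique hm₂.1 hb heq'
      exact hm₁.1.2 ⟨a, ha, h1⟩
    refine ⟨huAp, ?_⟩
    rintro v hv ⟨s, hs, rfl⟩
    obtain ⟨c, hc, e, he, rfl⟩ := G.decomp hs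
    obtain ⟨b', hb', f, hf⟩ := G.reduce (G.add_mem₂ hm₂.1.1 he)
    have hkey : G.q * z₁ + G.p * z₂ + (G.q * c + G.p * e)
        = G.q * (z₁ + c + f * G.p) + G.p * b' := by
      calc G.q * z₁ + G.p * z₂ + (G.q * c + G.p * e)
          = G.q * (z₁ + c) + G.p * (z₂ + e) := by ring
        _ = G.q * (z₁ + c) + G.p * (b' + f * G.q) := by rw [hf]
        _ = G.q * (z₁ + c + f * G.p) + G.p * b' := by ring
    have hA : z₁ + c + f * G.p ∈ Ap G.S₁ x := by
      refine ⟨G.add_mem₁ (G.add_mem₁ hz₁ hc) (G.fp_mem₁ f), ?_⟩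
      rintro ⟨t, ht, hAt⟩
      exact hv.2 ⟨G.q * t + G.p * b', G.combo ht hb'.1, by rw [hkey, hAt]; ring⟩
    have h1 := hm₁.2 _ hA ⟨c + f * G.p, G.add_mem₁ hc (G.fp_mem₁ f), by ring⟩
    have hc0 : c = 0 := by omega
    have hfp : f * G.p = 0 := by omega
    have hf0 : f = 0 := by
      rcases Nat.mul_eq_zero.mp hfp with h | h
      · exact h
      · exact absurd h G.p_ne
    have hb'eq : b' = z₂ + e := by rw [hf0, Nat.zero_mul, Nat.add_zero] at hf; omega
    have h2 := hm₂.2 b' hb' ⟨e, he, by omega⟩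
    have he0 : e = 0 := by omega
    simp [hc0, he0]
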